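/- Let U ⊆ ℝ be an open set with 0 ∉ U and y : ℝ → ℝ twice differentiable on U, satisfying y''(x) = (6·x·y(x)² + 1 - 2·x⁴·y'(x))/x⁵ on U. Then the function ȳ defined by ȳ(t) := y(1/t) is twice differentiable on V := {1/x : x ∈ U} and satisfies the first Painlevé equation ȳ''(t) = 6·ȳ(t)² + t on V. -/

import Mathlib

/-- If `y` is twice differentiable on an open set `U` not containing `0`
and satisfies `y'' = (6 x y^2 + 1 - 2 x^4 y') / x^5` on `U`, then `ȳ(t) := y(1/t)`
is twice differentiable on `V = {1/x : x ∈ U}` and satisfies the first Painlevé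
equation `ȳ'' = 6 ȳ^2 + t` there. -/
theorem statement1 (U : Set ℝ) (hU : IsOpen U) (h0 : (0:ℝ) ∉ U) (y : ℝ → ℝ)
    (hy1 : ∀ x ∈ U, DifferentiableAt ℝ y x)
    (hy2 : ∀ x ∈ U, DifferentiableAt ℝ (deriv y) x)
    (hode : ∀ x ∈ U, deriv (deriv y) x =
      (6 * x * (y x)^2 + 1 - 2 * x^4 * deriv y x) / x^5) :
    ∀ t ∈ (fun x : ℝ => 1 / x) '' U,
      DifferentiableAt ℝ (fun s => y (1 / s)) t ∧
      DifferentiableAt ℝ (deriv (fun s => y (1 / s))) t ∧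
      deriv (deriv (fun s => y (1 / s))) t = 6 * (y (1 / t))^2 + t := by
  intro t ht
  obtain ⟨x, hxU, hxt⟩ := ht
  have hx0 : x ≠ 0 := fun h => h0 (h ▸ hxU)
  have ht0 : t ≠ 0 := by
    rw [← hxt]; simp [hx0]
  have hxinv : t⁻¹ = x := by
    rw [← hxt]; field_simp
  set V : Set ℝ := Inv.inv ⁻¹' U with hVdef
  have hVne : ∀ s ∈ V, s ≠ 0 := by
    intro s hs h
    apply h0
    have : (0:ℝ)⁻¹ ∈ U := h ▸ hs
    simpa using this
  have hVopen : IsOpen V := by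
    rw [isOpen_iff_mem_nhds]
    intro s hs
    exact (continuousAt_inv₀ (hVne s hs)).preimage_mem_nhds (hU.mem_nhds hs)
  have htV : t ∈ V := by
    show t⁻¹ ∈ U
    rw [hxinv]; exact hxU
  -- first derivative
  have hd1 : ∀ s ∈ V, HasDerivAt (fun u => y (1 / u)) (deriv y s⁻¹ * -(s ^ 2)⁻¹) s := by
    intro s hs
    have hs0 := hVne s hs
    have h1 : HasDerivAt (fun u : ℝ => u⁻¹) (-(s ^ 2)⁻¹) s := hasDerivAt_inv hs0
    have h2 := ((hy1 s⁻¹ hs).hasDerivAt).comp s h1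
    simpa [one_div, Function.comp_def] using h2
  have heq : deriv (fun u => y (1 / u)) =ᶠ[nhds t] fun s => deriv y s⁻¹ * -(s ^ 2)⁻¹ :=
    Filter.eventually_of_mem (hVopen.mem_nhds htV) (fun s hs => (hd1 s hs).deriv)
  -- second derivative of the auxiliary function
  have hA : HasDerivAt (fun s : ℝ => deriv y s⁻¹) (deriv (deriv y) t⁻¹ * -(t ^ 2)⁻¹) t := by
    have := ((hy2 t⁻¹ htV).hasDerivAt).comp t (hasDerivAt_inv ht0)
    simpa [Function.comp_def] using this
  have hB : HasDerivAt (fun s : ℝ => -(s ^ 2)⁻¹) (2 * t / (t ^ 2) ^ 2) t := by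
    have hsq : HasDerivAt (fun s : ℝ => s ^ 2) (2 * t) t := by
      simpa using hasDerivAt_pow 2 t
    have := (hsq.inv (pow_ne_zero 2 ht0)).neg
    simpa [neg_div, Pi.neg_def, Pi.inv_def] using this
  have hg : HasDerivAt (fun s => deriv y s⁻¹ * -(s ^ 2)⁻¹) _ t := hA.mul hB
  refine ⟨(hd1 t htV).differentiableAt, ?_, ?_⟩
  · exact hg.differentiableAt.congr_of_eventuallyEq heq
  · rw [heq.deriv_eq, hg.deriv, hode t⁻¹ htV]
    rw [one_div, hxinv]
    have htx : t = x⁻¹ := by rw [← hxinv, inv_inv]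
    rw [htx]
    field_simp
    ring
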